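/- Let F be a V3-saturated family of subsets of [n], and let X ∈ F be not inclusion-minimal in F (i.e., some E ∈ F satisfies E ⊊ X). Then there exists Y ∈ F such that X covers Y in F and for every i ∈ X \ Y there exists Z_i ∈ F with Z_i \ Y = {i}. -/

import Mathlib

open Finset

variable {n : ℕ}

/-- Two sets are incomparable under inclusion. -/
def Incomp (A B : Finset (Fin n)) : Prop := ¬ A ⊆ B ∧ ¬ B ⊆ A

/-- `A, B1, B2, B3` form an induced copy of `V3`: `A` strictly below three
pairwise incomparable sets. -/
def IsV3Copy (A B1 B2 B3 : Finset (Fin n)) : Prop :=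
  A ⊂ B1 ∧ A ⊂ B2 ∧ A ⊂ B3 ∧ Incomp B1 B2 ∧ Incomp B1 B3 ∧ Incomp B2 B3

def V3Free (F : Finset (Finset (Fin n))) : Prop :=
  ¬ ∃ A ∈ F, ∃ B1 ∈ F, ∃ B2 ∈ F, ∃ B3 ∈ F, IsV3Copy A B1 B2 B3

def V3Saturated (F : Finset (Finset (Fin n))) : Prop :=
  V3Free F ∧ ∀ S : Finset (Fin n), S ∉ F → ¬ V3Free (insert S F)

/-- `X` covers `Y` in `F`. -/
def Covers (F : Finset (Finset (Fin n))) (X Y : Finset (Fin n)) : Prop :=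
  Y ⊂ X ∧ ∀ Z ∈ F, Y ⊆ Z → Z ⊆ X → Z = Y ∨ Z = X

/-- `(A,B,C) ∈ Θ_{X,Y}`: the induced order on `{A,B,C,X,Y}` is exactly
`A ⊊ Y ⊊ X`, `A ⊊ B ⊊ X`, `Y ⊊ C`, with `B ∥ Y`, `B ∥ C`, `C ∥ X`. -/
def Theta (X Y A B C : Finset (Fin n)) : Prop :=
  A ⊂ Y ∧ A ⊂ B ∧ Y ⊂ X ∧ B ⊂ X ∧ Y ⊂ C ∧ Incomp B Y ∧ Incomp B C ∧ Incomp C X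

/- ------------------- auxiliary lemmas ------------------- -/

lemma incomp_symm {A B : Finset (Fin n)} (h : Incomp A B) : Incomp B A := ⟨h.2, h.1⟩

lemma sub_ssub {a b c : Finset (Fin n)} (h1 : a ⊆ b) (h2 : b ⊂ c) : a ⊂ c := by
  rw [Finset.ssubset_def] at h2 ⊢
  exact ⟨h1.trans h2.1, fun h => h2.2 (h.trans h1)⟩

lemma ssub_sub {a b c : Finset (Fin n)} (h1 : a ⊂ b) (h2 : b ⊆ c) : a ⊂ c := by
  rw [Finset.ssubset_def] at h1 ⊢
  exact ⟨h1.1.trans h2, fun h => h1.2 (h2.trans h)⟩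

lemma ssub_of {a b : Finset (Fin n)} (h1 : a ⊆ b) (h2 : ¬ b ⊆ a) : a ⊂ b :=
  Finset.ssubset_def.mpr ⟨h1, h2⟩

/-- Any member `B ⊊ X` of `F` extends to a member `Y ⊇ B` covered by `X`. -/
lemma exists_cover_above (F : Finset (Finset (Fin n))) (X : Finset (Fin n))
    (B : Finset (Fin n)) (hB : B ∈ F) (hBX : B ⊂ X) :
    ∃ Y ∈ F, B ⊆ Y ∧ Covers F X Y := by
  classical
  have hne : (F.filter (fun E => B ⊆ E ∧ E ⊂ X)).Nonempty :=
    ⟨B, by simp [Finset.mem_filter, hB, hBX]⟩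
  obtain ⟨Y, hYs, hmax⟩ := (F.filter (fun E => B ⊆ E ∧ E ⊂ X)).exists_maximal hne
  rw [Finset.mem_filter] at hYs
  obtain ⟨hYF, hBY, hYX⟩ := hYs
  refine ⟨Y, hYF, hBY, hYX, ?_⟩
  intro Z hZ hYZ hZX
  by_cases hZX' : Z = X
  · right; exact hZX'
  · left
    have hZs : Z ∈ F.filter (fun E => B ⊆ E ∧ E ⊂ X) := by
      rw [Finset.mem_filter]
      exact ⟨hZ, hBY.trans hYZ, ssub_of hZX (fun h => hZX' (Finset.Subset.antisymm hZX h))⟩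
    have : ¬ Y < Z := fun h => (lt_irrefl Y) (lt_of_lt_of_le h (hmax hZs h.le))
    rw [Finset.lt_iff_ssubset] at this
    by_contra hne'
    exact this (ssub_of hYZ (fun h => hne' (Finset.Subset.antisymm h hYZ)))

/-- Extraction from saturation: inserting `S ⊇ Y ∈ F` creates a copy in which `S`
must be one of the three incomparable tops. -/
lemma sat_extract (F : Finset (Finset (Fin n))) (hfree : V3Free F)
    (hsat : ∀ S : Finset (Fin n), S ∉ F → ¬ V3Free (insert S F))
    (Y : Finset (Fin n)) (hY : Y ∈ F) (S : Finset (Fin n)) (hS : S ∉ F) (hYS : Y ⊆ S) :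
    ∃ A ∈ F, ∃ B ∈ F, ∃ C ∈ F,
      A ⊂ S ∧ A ⊂ B ∧ A ⊂ C ∧ Incomp S B ∧ Incomp S C ∧ Incomp B C := by
  have h := hsat S hS
  rw [V3Free] at h
  push_neg at h
  obtain ⟨A, hA, B1, hB1, B2, hB2, B3, hB3, h1, h2, h3, h12, h13, h23⟩ := h
  rcases Finset.mem_insert.mp hA with hAS | hAF
  · -- A = S : replace the bottom by Y
    subst hAS
    have hB1F : B1 ∈ F := by
      rcases Finset.mem_insert.mp hB1 with h | h
      · exact absurd (h ▸ h1) (ssubset_irrefl _)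
      · exact h
    have hB2F : B2 ∈ F := by
      rcases Finset.mem_insert.mp hB2 with h | h
      · exact absurd (h ▸ h2) (ssubset_irrefl _)
      · exact h
    have hB3F : B3 ∈ F := by
      rcases Finset.mem_insert.mp hB3 with h | h
      · exact absurd (h ▸ h3) (ssubset_irrefl _)
      · exact h
    exact absurd ⟨Y, hY, B1, hB1F, B2, hB2F, B3, hB3F,
      sub_ssub hYS h1, sub_ssub hYS h2, sub_ssub hYS h3, h12, h13, h23⟩ hfree
  · by_cases e1 : B1 = S
    · subst e1
      have hB2F : B2 ∈ F := by
        rcases Finset.mem_insert.mp hB2 with h | h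
        · exact absurd (h ▸ h12.1) (fun hc => hc (Finset.Subset.refl _))
        · exact h
      have hB3F : B3 ∈ F := by
        rcases Finset.mem_insert.mp hB3 with h | h
        · exact absurd (h ▸ h13.1) (fun hc => hc (Finset.Subset.refl _))
        · exact h
      exact ⟨A, hAF, B2, hB2F, B3, hB3F, h1, h2, h3, h12, h13, h23⟩
    · have hB1F : B1 ∈ F := (Finset.mem_insert.mp hB1).resolve_left e1
      by_cases e2 : B2 = S
      · subst e2
        have hB3F : B3 ∈ F := by
          rcases Finset.mem_insert.mp hB3 with h | h
          · exact absurd (h ▸ h23.1) (fun hc => hc (Finset.Subset.refl _))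
          · exact h
        exact ⟨A, hAF, B1, hB1F, B3, hB3F, h2, h1, h3,
          incomp_symm h12, h23, h13⟩
      · have hB2F : B2 ∈ F := (Finset.mem_insert.mp hB2).resolve_left e2
        by_cases e3 : B3 = S
        · subst e3
          exact ⟨A, hAF, B1, hB1F, B2, hB2F, h3, h1, h2,
            incomp_symm h13, incomp_symm h23, h12⟩
        · have hB3F : B3 ∈ F := (Finset.mem_insert.mp hB3).resolve_left e3
          exact absurd ⟨A, hAF, B1, hB1F, B2, hB2F, B3, hB3F,
            h1, h2, h3, h12, h13, h23⟩ hfree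

theorem stmt_6 (n : ℕ) (F : Finset (Finset (Fin n))) (hF : V3Saturated F)
    (X : Finset (Fin n)) (hX : X ∈ F) (hmin : ∃ E ∈ F, E ⊂ X) :
    ∃ Y ∈ F, Covers F X Y ∧ ∀ i ∈ X \ Y, ∃ Z ∈ F, Z \ Y = {i} := by
  classical
  obtain ⟨hfree, hsat⟩ := hF
  obtain ⟨E, hE, hEX⟩ := hmin
  obtain ⟨Y0, hY0F, _, hY0cov⟩ := exists_cover_above F X E hE hEX
  set g : Finset (Fin n) → ℕ :=
    fun Y => (F.filter (fun C => Y ⊂ C ∧ ¬ C ⊆ X ∧ ¬ X ⊆ C)).card with hg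
  have hcne : (F.filter (fun Y => Covers F X Y)).Nonempty :=
    ⟨Y0, Finset.mem_filter.mpr ⟨hY0F, hY0cov⟩⟩
  obtain ⟨Y, hYmem, hYmin⟩ := (F.filter (fun Y => Covers F X Y)).exists_min_image g hcne
  rw [Finset.mem_filter] at hYmem
  obtain ⟨hYF, hYcov⟩ := hYmem
  have hYX : Y ⊂ X := hYcov.1
  have hcover := hYcov.2
  refine ⟨Y, hYF, hYcov, ?_⟩
  -- Θ_{X,Y} is empty
  have hTE : ∀ A ∈ F, ∀ B ∈ F, ∀ C ∈ F, ¬ Theta X Y A B C := by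
    rintro A hA B hB C hC ⟨hAY, hAB, _, hBX, hYC, hBY, hBC, hCX⟩
    obtain ⟨Y', hY'F, hBY', hY'cov⟩ := exists_cover_above F X B hB hBX
    have hsub : F.filter (fun C' => Y' ⊂ C' ∧ ¬ C' ⊆ X ∧ ¬ X ⊆ C')
        ⊆ F.filter (fun C' => Y ⊂ C' ∧ ¬ C' ⊆ X ∧ ¬ X ⊆ C') := by
      intro C' hC'
      rw [Finset.mem_filter] at hC' ⊢
      obtain ⟨hC'F, hY'C', hC'X, hXC'⟩ := hC'
      refine ⟨hC'F, ?_, hC'X, hXC'⟩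
      by_cases h1 : C ⊆ C'
      · exact ssub_sub hYC h1
      by_cases h2 : C' ⊆ C
      · exact absurd ((hBY'.trans hY'C'.1).trans h2) hBC.1
      · exact absurd ⟨A, hA, X, hX, C, hC, C', hC'F,
          sub_ssub hAY.1 hYX, ssub_sub hAY hYC.1, sub_ssub (hAB.1.trans hBY') hY'C',
          incomp_symm hCX, ⟨hXC', hC'X⟩, ⟨h1, h2⟩⟩ hfree
    have hCin : C ∈ F.filter (fun C' => Y ⊂ C' ∧ ¬ C' ⊆ X ∧ ¬ X ⊆ C') :=
      Finset.mem_filter.mpr ⟨hC, hYC, hCX.1, hCX.2⟩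
    have hCnot : C ∉ F.filter (fun C' => Y' ⊂ C' ∧ ¬ C' ⊆ X ∧ ¬ X ⊆ C') := by
      rw [Finset.mem_filter]
      rintro ⟨-, hY'C2, -, -⟩
      exact hBC.1 (hBY'.trans hY'C2.1)
    have hlt : g Y' < g Y :=
      Finset.card_lt_card (Finset.ssubset_def.mpr ⟨hsub, fun h => hCnot (h hCin)⟩)
    have hle : g Y ≤ g Y' :=
      hYmin Y' (Finset.mem_filter.mpr ⟨hY'F, hY'cov⟩)
    omega
  -- the per-element statement
  intro i hi
  rw [Finset.mem_sdiff] at hi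
  by_contra hno
  push_neg at hno
  have hZchar : ∀ Z ∈ F, Z ⊆ Y ∪ {i} → i ∈ Z → False := by
    intro Z hZ hZS hiZ
    apply hno Z hZ
    apply Finset.Subset.antisymm
    · intro a ha
      rw [Finset.mem_sdiff] at ha
      rw [Finset.mem_singleton]
      have := hZS ha.1
      rw [Finset.mem_union, Finset.mem_singleton] at this
      tauto
    · intro a ha
      rw [Finset.mem_singleton] at ha
      subst ha
      rw [Finset.mem_sdiff]
      exact ⟨hiZ, hi.2⟩
  set S : Finset (Fin n) := Y ∪ {i} with hSdef
  have hYS : Y ⊆ S := Finset.subset_union_left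
  have hiS : i ∈ S := Finset.mem_union_right _ (Finset.mem_singleton_self i)
  have hSX : S ⊆ X := Finset.union_subset hYX.1 (Finset.singleton_subset_iff.mpr hi.1)
  have hSF : S ∉ F := fun h => hZchar S h (Finset.Subset.refl _) hiS
  have hXS : ¬ X ⊆ S := fun h => hZchar X hX h hi.1
  obtain ⟨A, hA, B, hB, C, hC, hAS, hAB, hAC, hSB, hSC, hBC⟩ :=
    sat_extract F hfree hsat Y hYF S hSF hYS
  have hiA : i ∉ A := fun h => hZchar A hA hAS.1 h
  have hAY : A ⊆ Y := by
    intro a ha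
    have := hAS.1 ha
    rw [hSdef, Finset.mem_union, Finset.mem_singleton] at this
    rcases this with h | h
    · exact h
    · exact absurd (h ▸ ha) hiA
  have hXB : ¬ X ⊆ B := fun h => hSB.1 (hSX.trans h)
  have hXC : ¬ X ⊆ C := fun h => hSC.1 (hSX.trans h)
  -- a top of the copy lying inside X is incomparable with Y
  have hYtop : ∀ T ∈ F, Incomp S T → T ⊆ X → Incomp Y T := by
    intro T hT hST hTX
    constructor
    · intro hYT
      rcases hcover T hT hYT hTX with h | h
      · exact hST.2 (h ▸ hYS)
      · exact hST.1 (h ▸ hSX)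
    · intro hTY
      exact hST.2 (hTY.trans hYS)
  by_cases hBx : B ⊆ X <;> by_cases hCx : C ⊆ X
  · -- both tops inside X : V3 (A, Y, B, C)
    have hYB := hYtop B hB hSB hBx
    have hYC := hYtop C hC hSC hCx
    have hAYss : A ⊂ Y := ssub_of hAY (fun h => hYB.1 (h.trans hAB.1))
    exact absurd ⟨A, hA, Y, hYF, B, hB, C, hC, hAYss, hAB, hAC, hYB, hYC, hBC⟩ hfree
  · -- B inside X, C not : Θ-triple (A, B, C)
    have hYB := hYtop B hB hSB hBx
    have hAYss : A ⊂ Y := ssub_of hAY (fun h => hYB.1 (h.trans hAB.1))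
    have hCYnot : ¬ C ⊆ Y := fun h => hCx (h.trans hYX.1)
    by_cases hYc : Y ⊆ C
    · exact hTE A hA B hB C hC
        ⟨hAYss, hAB, hYX, ssub_of hBx hXB, ssub_of hYc hCYnot,
          incomp_symm hYB, hBC, ⟨hCx, hXC⟩⟩
    · exact absurd ⟨A, hA, Y, hYF, B, hB, C, hC, hAYss, hAB, hAC, hYB,
        ⟨hYc, hCYnot⟩, hBC⟩ hfree
  · -- C inside X, B not : Θ-triple (A, C, B)
    have hYC := hYtop C hC hSC hCx
    have hAYss : A ⊂ Y := ssub_of hAY (fun h => hYC.1 (h.trans hAC.1))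
    have hBYnot : ¬ B ⊆ Y := fun h => hBx (h.trans hYX.1)
    by_cases hYb : Y ⊆ B
    · exact hTE A hA C hC B hB
        ⟨hAYss, hAC, hYX, ssub_of hCx hXC, ssub_of hYb hBYnot,
          incomp_symm hYC, incomp_symm hBC, ⟨hBx, hXB⟩⟩
    · exact absurd ⟨A, hA, Y, hYF, B, hB, C, hC, hAYss, hAB, hAC,
        ⟨hYb, hBYnot⟩, hYC, hBC⟩ hfree
  · -- neither inside X : V3 (A, X, B, C)
    exact absurd ⟨A, hA, X, hX, B, hB, C, hC, sub_ssub hAY hYX, hAB, hAC,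
      ⟨hXB, hBx⟩, ⟨hXC, hCx⟩, hBC⟩ hfree
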